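/- In the game i-Mark({2,4},{2}), for every n ≥ 11 with n = 6q + r, 0 ≤ r ≤ 5: if r = 1 or r = 4 then g(n) = 0; if r = 2 or r = 3 then g(n) = 1; if r = 5 then g(n) = 2; and if r = 0 then g(n) ∈ {2,3}. -/
import Mathlib


/-- The minimum excludant of a finite set of naturals. -/
noncomputable def mex (s : Finset ℕ) : ℕ := sInf {k : ℕ | k ∉ s}

/-- Options of the game i-Mark(S,D) from a heap of `n` tokens:
move to `n - s` for `s ∈ S` (with `1 ≤ s ≤ n`), or to `n / d` for `d ∈ D`
(with `2 ≤ d` and `d ∣ n`, `n ≥ 1`). -/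
def iMarkOptions (S D : Finset ℕ) (n : ℕ) : Finset ℕ :=
  ((S.filter (fun s => 1 ≤ s ∧ s ≤ n)).image (fun s => n - s)) ∪
  ((D.filter (fun d => 2 ≤ d ∧ d ∣ n ∧ 1 ≤ n)).image (fun d => n / d))

theorem iMarkOptions_lt {S D : Finset ℕ} {n m : ℕ} (h : m ∈ iMarkOptions S D n) : m < n := by
  simp only [iMarkOptions, Finset.mem_union, Finset.mem_image, Finset.mem_filter] at h
  rcases h with ⟨s, ⟨_, h1, h2⟩, rfl⟩ | ⟨d, ⟨_, h2, hd, hn⟩, rfl⟩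
  · omega
  · exact Nat.div_lt_self hn h2

/-- The Sprague-Grundy value of a heap of `n` tokens in the game i-Mark(S,D). -/
noncomputable def grundy (S D : Finset ℕ) (n : ℕ) : ℕ :=
  mex ((iMarkOptions S D n).attach.image (fun m => grundy S D m.1))
termination_by n
decreasing_by exact iMarkOptions_lt m.2

/-- `misereP S D n` means `n` is a P-position of i-Mark(S,D) under misère convention:
`n` has at least one option and every option is an N-position. -/
def misereP (S D : Finset ℕ) (n : ℕ) : Prop :=
  (iMarkOptions S D n).Nonempty ∧
    ∀ m : {x // x ∈ iMarkOptions S D n}, ¬ misereP S D m.1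
termination_by n
decreasing_by exact iMarkOptions_lt m.2

lemma mex_eq_of {s : Finset ℕ} {a : ℕ} (h1 : a ∉ s) (h2 : ∀ b < a, b ∈ s) : mex s = a := by
  have hle : sInf {k : ℕ | k ∉ s} ≤ a := Nat.sInf_le h1
  rcases lt_or_eq_of_le hle with h | h
  · exact absurd (h2 _ h) (Nat.sInf_mem (⟨a, h1⟩ : Set.Nonempty {k : ℕ | k ∉ s}))
  · exact h

lemma grundy_eq (S D : Finset ℕ) (n : ℕ) :
    grundy S D n = mex ((iMarkOptions S D n).image (grundy S D)) := by
  rw [grundy]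
  congr 1
  have : (iMarkOptions S D n).attach.image (fun m => grundy S D m.1)
      = ((iMarkOptions S D n).attach.image Subtype.val).image (grundy S D) := by
    rw [Finset.image_image]; rfl
  rw [this, Finset.attach_image_val]

lemma options_even {n : ℕ} (h2 : 2 ∣ n) (h4 : 4 ≤ n) :
    iMarkOptions {2,4} {2} n = {n-2, n-4, n/2} := by
  ext m
  simp only [iMarkOptions, Finset.mem_union, Finset.mem_image, Finset.mem_filter,
    Finset.mem_insert, Finset.mem_singleton]
  constructor
  · rintro (⟨s, ⟨hs, hs1, hs2⟩, rfl⟩ | ⟨d, ⟨hd, hd2, hdvd, hn1⟩, rfl⟩)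
    · rcases hs with rfl | rfl <;> omega
    · subst hd
      tauto
  · rintro (rfl | rfl | rfl)
    · exact Or.inl ⟨2, by simp; omega, rfl⟩
    · exact Or.inl ⟨4, by simp; omega, rfl⟩
    · exact Or.inr ⟨2, by simp; omega, rfl⟩

lemma options_odd {n : ℕ} (h2 : ¬ 2 ∣ n) (h4 : 4 ≤ n) :
    iMarkOptions {2,4} {2} n = {n-2, n-4} := by
  ext m
  simp only [iMarkOptions, Finset.mem_union, Finset.mem_image, Finset.mem_filter,
    Finset.mem_insert, Finset.mem_singleton]
  constructor
  · rintro (⟨s, ⟨hs, hs1, hs2⟩, rfl⟩ | ⟨d, ⟨hd, hd2, hdvd, hn1⟩, rfl⟩)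
    · rcases hs with rfl | rfl <;> omega
    · subst hd
      exact absurd hdvd h2
  · rintro (rfl | rfl)
    · exact Or.inl ⟨2, by simp; omega, rfl⟩
    · exact Or.inl ⟨4, by simp; omega, rfl⟩

lemma grundy_even {n : ℕ} (h2 : 2 ∣ n) (h4 : 4 ≤ n) :
    grundy {2,4} {2} n =
      mex {grundy {2,4} {2} (n-2), grundy {2,4} {2} (n-4), grundy {2,4} {2} (n/2)} := by
  rw [grundy_eq, options_even h2 h4]
  simp [Finset.image_insert, Finset.image_singleton]

lemma grundy_odd {n : ℕ} (h2 : ¬ 2 ∣ n) (h4 : 4 ≤ n) :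
    grundy {2,4} {2} n = mex {grundy {2,4} {2} (n-2), grundy {2,4} {2} (n-4)} := by
  rw [grundy_eq, options_odd h2 h4]
  simp [Finset.image_insert, Finset.image_singleton]

example : iMarkOptions {2,4} {2} 2 = {0,1} := by decide
lemma g0 : grundy {2,4} {2} 0 = 0 := by
  rw [grundy_eq, show iMarkOptions {2,4} {2} 0 = ∅ by decide, Finset.image_empty]
  exact mex_eq_of (by decide) (fun b hb => absurd hb (Nat.not_lt_zero b))

lemma g1 : grundy {2,4} {2} 1 = 0 := by
  rw [grundy_eq, show iMarkOptions {2,4} {2} 1 = ∅ by decide, Finset.image_empty]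
  exact mex_eq_of (by decide) (fun b hb => absurd hb (Nat.not_lt_zero b))

lemma g2 : grundy {2,4} {2} 2 = 1 := by
  rw [grundy_eq, show iMarkOptions {2,4} {2} 2 = {0,1} by decide]
  norm_num [g0, g1]
  exact mex_eq_of (by decide) (by decide)

lemma g3 : grundy {2,4} {2} 3 = 1 := by
  rw [grundy_eq, show iMarkOptions {2,4} {2} 3 = {1} by decide]
  norm_num [g1]
  exact mex_eq_of (by decide) (by decide)
lemma g4 : grundy {2,4} {2} 4 = 2 := by
  rw [grundy_even (by norm_num) (by norm_num)]
  norm_num [g2, g0, g2]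
  exact mex_eq_of (by decide) (by decide)

lemma g5 : grundy {2,4} {2} 5 = 2 := by
  rw [grundy_odd (by norm_num) (by norm_num)]
  norm_num [g3, g1]
  exact mex_eq_of (by decide) (by decide)

lemma g6 : grundy {2,4} {2} 6 = 0 := by
  rw [grundy_even (by norm_num) (by norm_num)]
  norm_num [g4, g2, g3]
  exact mex_eq_of (by decide) (by decide)

lemma g7 : grundy {2,4} {2} 7 = 0 := by
  rw [grundy_odd (by norm_num) (by norm_num)]
  norm_num [g5, g3]
  exact mex_eq_of (by decide) (by decide)

lemma g8 : grundy {2,4} {2} 8 = 1 := by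
  rw [grundy_even (by norm_num) (by norm_num)]
  norm_num [g6, g4, g4]
  exact mex_eq_of (by decide) (by decide)

lemma g9 : grundy {2,4} {2} 9 = 1 := by
  rw [grundy_odd (by norm_num) (by norm_num)]
  norm_num [g7, g5]
  exact mex_eq_of (by decide) (by decide)

lemma g10 : grundy {2,4} {2} 10 = 3 := by
  rw [grundy_even (by norm_num) (by norm_num)]
  norm_num [g8, g6, g5]
  exact mex_eq_of (by decide) (by decide)

lemma g11 : grundy {2,4} {2} 11 = 2 := by
  rw [grundy_odd (by norm_num) (by norm_num)]
  norm_num [g9, g7]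
  exact mex_eq_of (by decide) (by decide)

lemma g12 : grundy {2,4} {2} 12 = 2 := by
  rw [grundy_even (by norm_num) (by norm_num)]
  norm_num [g10, g8, g6]
  exact mex_eq_of (by decide) (by decide)

lemma g13 : grundy {2,4} {2} 13 = 0 := by
  rw [grundy_odd (by norm_num) (by norm_num)]
  norm_num [g11, g9]
  exact mex_eq_of (by decide) (by decide)

lemma g14 : grundy {2,4} {2} 14 = 1 := by
  rw [grundy_even (by norm_num) (by norm_num)]
  norm_num [g12, g10, g7]
  exact mex_eq_of (by decide) (by decide)

lemma g15 : grundy {2,4} {2} 15 = 1 := by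
  rw [grundy_odd (by norm_num) (by norm_num)]
  norm_num [g13, g11]
  exact mex_eq_of (by decide) (by decide)

lemma g16 : grundy {2,4} {2} 16 = 0 := by
  rw [grundy_even (by norm_num) (by norm_num)]
  norm_num [g14, g12, g8]
  exact mex_eq_of (by decide) (by decide)

lemma g17 : grundy {2,4} {2} 17 = 2 := by
  rw [grundy_odd (by norm_num) (by norm_num)]
  norm_num [g15, g13]
  exact mex_eq_of (by decide) (by decide)

lemma g18 : grundy {2,4} {2} 18 = 2 := by
  rw [grundy_even (by norm_num) (by norm_num)]
  norm_num [g16, g14, g9]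
  exact mex_eq_of (by decide) (by decide)

lemma g19 : grundy {2,4} {2} 19 = 0 := by
  rw [grundy_odd (by norm_num) (by norm_num)]
  norm_num [g17, g15]
  exact mex_eq_of (by decide) (by decide)

lemma g20 : grundy {2,4} {2} 20 = 1 := by
  rw [grundy_even (by norm_num) (by norm_num)]
  norm_num [g18, g16, g10]
  exact mex_eq_of (by decide) (by decide)

lemma g21 : grundy {2,4} {2} 21 = 1 := by
  rw [grundy_odd (by norm_num) (by norm_num)]
  norm_num [g19, g17]
  exact mex_eq_of (by decide) (by decide)

/-- Sprague-Grundy values of i-Mark({2,4},{2}) for n ≥ 11. -/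
theorem iMark_24_2_grundy (n : ℕ) (hn : 11 ≤ n) :
    ((n % 6 = 1 ∨ n % 6 = 4) → grundy {2, 4} {2} n = 0) ∧
    ((n % 6 = 2 ∨ n % 6 = 3) → grundy {2, 4} {2} n = 1) ∧
    (n % 6 = 5 → grundy {2, 4} {2} n = 2) ∧
    (n % 6 = 0 → grundy {2, 4} {2} n = 2 ∨ grundy {2, 4} {2} n = 3) := by
  revert hn
  induction n using Nat.strong_induction_on with
  | _ n ih =>
  intro hn
  by_cases hsmall : n < 22
  · interval_cases n <;>
      norm_num [g11, g12, g13, g14, g15, g16, g17, g18, g19, g20, g21]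
  · push_neg at hsmall
    have h6 : n % 6 = 0 ∨ n % 6 = 1 ∨ n % 6 = 2 ∨ n % 6 = 3 ∨ n % 6 = 4 ∨ n % 6 = 5 := by
      omega
    rcases h6 with hr | hr | hr | hr | hr | hr
    · -- r = 0
      have h1 : grundy {2,4} {2} (n-2) = 0 :=
        (ih (n-2) (by omega) (by omega)).1 (by omega)
      have h2 : grundy {2,4} {2} (n-4) = 1 :=
        (ih (n-4) (by omega) (by omega)).2.1 (by omega)
      have hd : n/2 % 6 = 0 ∨ n/2 % 6 = 3 := by omega
      have hy : grundy {2,4} {2} (n/2) = 1 ∨ grundy {2,4} {2} (n/2) = 2 ∨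
          grundy {2,4} {2} (n/2) = 3 := by
        rcases hd with hd | hd
        · rcases (ih (n/2) (by omega) (by omega)).2.2.2 hd with h | h
          · exact Or.inr (Or.inl h)
          · exact Or.inr (Or.inr h)
        · exact Or.inl ((ih (n/2) (by omega) (by omega)).2.1 (Or.inr hd))
      refine ⟨fun h => by omega, fun h => by omega, fun h => by omega, fun _ => ?_⟩
      rw [grundy_even (by omega) (by omega), h1, h2]
      rcases hy with h | h | h <;> rw [h]
      · exact Or.inl (mex_eq_of (by decide) (by decide))
      · exact Or.inr (mex_eq_of (by decide) (by decide))
      · exact Or.inl (mex_eq_of (by decide) (by decide))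
    · -- r = 1
      have h1 : grundy {2,4} {2} (n-2) = 2 :=
        (ih (n-2) (by omega) (by omega)).2.2.1 (by omega)
      have h2 : grundy {2,4} {2} (n-4) = 1 :=
        (ih (n-4) (by omega) (by omega)).2.1 (by omega)
      refine ⟨fun _ => ?_, fun h => by omega, fun h => by omega, fun h => by omega⟩
      rw [grundy_odd (by omega) (by omega), h1, h2]
      exact mex_eq_of (by decide) (by decide)
    · -- r = 2
      have h1 : grundy {2,4} {2} (n-2) = 2 ∨ grundy {2,4} {2} (n-2) = 3 :=
        (ih (n-2) (by omega) (by omega)).2.2.2 (by omega)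
      have h2 : grundy {2,4} {2} (n-4) = 0 :=
        (ih (n-4) (by omega) (by omega)).1 (by omega)
      have hd : n/2 % 6 = 1 ∨ n/2 % 6 = 4 := by omega
      have hy : grundy {2,4} {2} (n/2) = 0 :=
        (ih (n/2) (by omega) (by omega)).1 hd
      refine ⟨fun h => by omega, fun _ => ?_, fun h => by omega, fun h => by omega⟩
      rw [grundy_even (by omega) (by omega), h2, hy]
      rcases h1 with h | h <;> rw [h] <;>
        exact mex_eq_of (by decide) (by decide)
    · -- r = 3
      have h1 : grundy {2,4} {2} (n-2) = 0 :=
        (ih (n-2) (by omega) (by omega)).1 (by omega)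
      have h2 : grundy {2,4} {2} (n-4) = 2 :=
        (ih (n-4) (by omega) (by omega)).2.2.1 (by omega)
      refine ⟨fun h => by omega, fun _ => ?_, fun h => by omega, fun h => by omega⟩
      rw [grundy_odd (by omega) (by omega), h1, h2]
      exact mex_eq_of (by decide) (by decide)
    · -- r = 4
      have h1 : grundy {2,4} {2} (n-2) = 1 :=
        (ih (n-2) (by omega) (by omega)).2.1 (by omega)
      have h2 : grundy {2,4} {2} (n-4) = 2 ∨ grundy {2,4} {2} (n-4) = 3 :=
        (ih (n-4) (by omega) (by omega)).2.2.2 (by omega)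
      have hd : n/2 % 6 = 2 ∨ n/2 % 6 = 5 := by omega
      have hy : grundy {2,4} {2} (n/2) = 1 ∨ grundy {2,4} {2} (n/2) = 2 := by
        rcases hd with hd | hd
        · exact Or.inl ((ih (n/2) (by omega) (by omega)).2.1 (Or.inl hd))
        · exact Or.inr ((ih (n/2) (by omega) (by omega)).2.2.1 hd)
      refine ⟨fun _ => ?_, fun h => by omega, fun h => by omega, fun h => by omega⟩
      rw [grundy_even (by omega) (by omega), h1]
      rcases h2 with h | h <;> rcases hy with h' | h' <;> rw [h, h'] <;>
        exact mex_eq_of (by decide) (by decide)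
    · -- r = 5
      have h1 : grundy {2,4} {2} (n-2) = 1 :=
        (ih (n-2) (by omega) (by omega)).2.1 (by omega)
      have h2 : grundy {2,4} {2} (n-4) = 0 :=
        (ih (n-4) (by omega) (by omega)).1 (by omega)
      refine ⟨fun h => by omega, fun h => by omega, fun _ => ?_, fun h => by omega⟩
      rw [grundy_odd (by omega) (by omega), h1, h2]
      exact mex_eq_of (by decide) (by decide)
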